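/- If L is a strongly continuous domain, then the strong Lawson topology λ_s(L), the join of the strong Scott topology and the lower topology, is Hausdorff; moreover if L is a complete semilattice then λ_s(L) is compact and T1, hence compact Hausdorff when L is a strongly continuous complete semilattice. -/
import Mathlib


open Set

variable {L : Type*}

/-- A directed subset: nonempty and directed under `≤`. -/
def DirSet [Preorder L] (D : Set L) : Prop := D.Nonempty ∧ DirectedOn (· ≤ ·) D

/-- Strongly Scott open sets (the family `σ^s(L)`). -/
def StronglyScottOpen [Preorder L] [SupSet L] (U : Set L) : Prop :=
  IsUpperSet U ∧ ∀ D : Set L, DirSet D → ∀ x : L,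
    Ici (sSup D) ∩ Ici x ⊆ U → ∃ d ∈ D, Ici d ∩ Ici x ⊆ U

/-- The strong Scott topology `σ_s(L)`, generated by the strongly Scott open sets. -/
def strongScott (L : Type*) [Preorder L] [SupSet L] : TopologicalSpace L :=
  TopologicalSpace.generateFrom {U | StronglyScottOpen U}

/-- Scott open sets. -/
def ScottOpen [Preorder L] [SupSet L] (U : Set L) : Prop :=
  IsUpperSet U ∧ ∀ D : Set L, DirSet D → sSup D ∈ U → (D ∩ U).Nonempty

/-- The Scott topology `σ(L)`. -/
def scottTop (L : Type*) [Preorder L] [SupSet L] : TopologicalSpace L :=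
  TopologicalSpace.generateFrom {U | ScottOpen U}

/-- The upper topology `υ(L)`. -/
def upperTop (L : Type*) [Preorder L] : TopologicalSpace L :=
  TopologicalSpace.generateFrom {U | ∃ x : L, U = (Iic x)ᶜ}

/-- The lower topology `ω(L)`. -/
def lowerTop (L : Type*) [Preorder L] : TopologicalSpace L :=
  TopologicalSpace.generateFrom {U | ∃ x : L, U = (Ici x)ᶜ}

/-- The strong way-below relation `x ≪_s y`. -/
def SWayBelow [Preorder L] (x y : L) : Prop :=
  ∀ D : Set L, DirSet D → ∀ a : L,
    (⋂ d ∈ D, Ici d) ∩ Ici a ⊆ Ici y → ∃ d ∈ D, Ici d ∩ Ici a ⊆ Ici x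

/-- The way-below relation `x ≪ y`. -/
def WayBelow [Preorder L] [SupSet L] (x y : L) : Prop :=
  ∀ D : Set L, DirSet D → y ≤ sSup D → ∃ d ∈ D, x ≤ d

/-- `X` with topology `t` is a C-space (w.r.t. the order of `L`). -/
def IsCSpace [Preorder L] (t : TopologicalSpace L) : Prop :=
  ∀ U : Set L, @IsOpen _ (t) U → ∀ x ∈ U, ∃ y ∈ U,
    x ∈ @interior L t (Ici y) ∧ Ici y ⊆ U

/-- `L` is a strongly continuous domain. -/
def StronglyContinuousDomain (L : Type*) [Preorder L] [SupSet L] : Prop :=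
  IsCSpace (strongScott L)

/-- `L` is a continuous domain. -/
def ContinuousDomain (L : Type*) [Preorder L] [SupSet L] : Prop :=
  ∀ x : L, DirSet {y | WayBelow y x} ∧ IsLUB {y | WayBelow y x} x

/-- `L` is a hypercontinuous domain. -/
def HypercontinuousDomain (L : Type*) [Preorder L] : Prop :=
  ∀ x : L, DirSet {y | x ∈ @interior L (upperTop L) (Ici y)} ∧
    IsLUB {y | x ∈ @interior L (upperTop L) (Ici y)} x

/-- The strong Lawson topology `λ_s(L)`: common refinement of `σ_s(L)` and `ω(L)`. -/
def strongLawson (L : Type*) [Preorder L] [SupSet L] : TopologicalSpace L :=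
  TopologicalSpace.generateFrom
    {U | @IsOpen _ (strongScott L) U ∨ @IsOpen _ (lowerTop L) U}

section Proofs

open TopologicalSpace Filter

lemma int_isOpen (t : TopologicalSpace L) (s : Set L) :
    @IsOpen L t (@interior L t s) := by
  letI := t; exact isOpen_interior

lemma int_subset (t : TopologicalSpace L) (s : Set L) : @interior L t s ⊆ s := by
  letI := t; exact interior_subset

lemma sso_compl_Iic [CompletePartialOrder L] (x : L) :
    StronglyScottOpen ((Iic x)ᶜ : Set L) := by
  constructor
  · intro a b hab ha hb
    exact ha (hab.trans hb)
  · intro D hD a hsub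
    by_contra hcon
    have hx : x ∈ upperBounds D := by
      intro d hd
      rcases Set.not_subset.mp (fun h => hcon ⟨d, hd, h⟩) with ⟨z, hz1, hz2⟩
      have hzx : z ≤ x := not_not.mp hz2
      exact hz1.1.trans hzx
    have hax : a ≤ x := by
      obtain ⟨d, hd⟩ := hD.1
      rcases Set.not_subset.mp (fun h => hcon ⟨d, hd, h⟩) with ⟨z, hz1, hz2⟩
      exact hz1.2.trans (not_not.mp hz2)
    have hsx : sSup D ≤ x := (CompletePartialOrder.lubOfDirected D hD.2).2 hx
    exact hsub ⟨hsx, hax⟩ le_rfl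

lemma strongLawson_eq (L : Type*) [Preorder L] [SupSet L] :
    strongLawson L = generateFrom
      ({U | StronglyScottOpen U} ∪ {U : Set L | ∃ x : L, U = (Ici x)ᶜ}) := by
  apply le_antisymm
  · rw [le_generateFrom_iff_subset_isOpen]
    rintro U (hU | ⟨x, rfl⟩)
    · exact isOpen_generateFrom_of_mem (Or.inl (isOpen_generateFrom_of_mem hU))
    · exact isOpen_generateFrom_of_mem (Or.inr (isOpen_generateFrom_of_mem ⟨x, rfl⟩))
  · unfold strongLawson
    rw [le_generateFrom_iff_subset_isOpen]
    rintro U (h1 | h2)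
    · exact generateFrom_anti Set.subset_union_left _ h1
    · exact generateFrom_anti Set.subset_union_right _ h2

lemma le_nhds_strongLawson [Preorder L] [SupSet L] (f : Filter L) (a : L)
    (h1 : ∀ U : Set L, StronglyScottOpen U → a ∈ U → U ∈ f)
    (h2 : ∀ x : L, ¬ x ≤ a → (Ici x)ᶜ ∈ f) :
    f ≤ @nhds L (strongLawson L) a := by
  rw [strongLawson_eq, nhds_generateFrom]
  refine le_iInf fun s => le_iInf fun hs => ?_
  obtain ⟨has, hsg⟩ := hs
  rw [Filter.le_principal_iff]
  rcases hsg with h | ⟨x, rfl⟩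
  · exact h1 s h has
  · exact h2 x has

lemma isOpen_strongLawson_of_sso [Preorder L] [SupSet L] {U : Set L}
    (h : @IsOpen L (strongScott L) U) : @IsOpen L (strongLawson L) U :=
  isOpen_generateFrom_of_mem (Or.inl h)

lemma isOpen_strongLawson_compl_Ici [Preorder L] [SupSet L] (x : L) :
    @IsOpen L (strongLawson L) ((Ici x)ᶜ) :=
  isOpen_generateFrom_of_mem (Or.inr (isOpen_generateFrom_of_mem ⟨x, rfl⟩))

theorem strongLawson_t2_and_compact [CompletePartialOrder L] :
    (StronglyContinuousDomain L → @T2Space L (strongLawson L)) ∧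
    ((∀ S : Set L, S.Nonempty → ∃ b : L, IsGLB S b) →
      @CompactSpace L (strongLawson L) ∧ @T1Space L (strongLawson L)) := by
  constructor
  · intro hcd
    letI : TopologicalSpace L := strongLawson L
    have key : ∀ u v : L, ¬ u ≤ v → ∃ A B : Set L, IsOpen A ∧ IsOpen B ∧
        u ∈ A ∧ v ∈ B ∧ Disjoint A B := by
      intro u v huv
      have hU : @IsOpen L (strongScott L) ((Iic v)ᶜ) :=
        isOpen_generateFrom_of_mem (sso_compl_Iic v)
      obtain ⟨z, hzU, hzint, -⟩ := hcd _ hU u huv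
      refine ⟨@interior L (strongScott L) (Ici z), (Ici z)ᶜ,
        isOpen_strongLawson_of_sso (int_isOpen (strongScott L) (Ici z)),
        isOpen_strongLawson_compl_Ici z, hzint, hzU, ?_⟩
      exact disjoint_compl_right.mono_left (int_subset (strongScott L) (Ici z))
    constructor
    intro x y hxy
    rcases not_and_or.mp (fun hh => hxy (le_antisymm hh.1 hh.2)) with h | h
    · exact key x y h
    · obtain ⟨A, B, hA, hB, hyA, hxB, hd⟩ := key y x h
      exact ⟨B, A, hB, hA, hxB, hyA, hd.symm⟩
  · intro hglb
    letI : TopologicalSpace L := strongLawson L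
    constructor
    · rw [← isCompact_univ_iff, isCompact_iff_ultrafilter_le_nhds]
      intro f _
      set D := {b : L | ∃ A ∈ f, IsGLB A b} with hDdef
      have hne : D.Nonempty := by
        obtain ⟨b, hb⟩ := hglb univ (f.nonempty_of_mem univ_mem)
        exact ⟨b, Set.univ, univ_mem, hb⟩
      have hdir : DirectedOn (· ≤ ·) D := by
        rintro b₁ ⟨A₁, hA₁, hg₁⟩ b₂ ⟨A₂, hA₂, hg₂⟩
        have hAB : A₁ ∩ A₂ ∈ f := inter_mem hA₁ hA₂
        obtain ⟨b₃, hb₃⟩ := hglb _ (Ultrafilter.nonempty_of_mem hAB)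
        refine ⟨b₃, ⟨_, hAB, hb₃⟩, hb₃.2 ?_, hb₃.2 ?_⟩
        · exact fun w hw => hg₁.1 hw.1
        · exact fun w hw => hg₂.1 hw.2
      have hlub : IsLUB D (sSup D) := CompletePartialOrder.lubOfDirected D hdir
      refine ⟨sSup D, Set.mem_univ _, le_nhds_strongLawson (↑f) (sSup D) ?_ ?_⟩
      · intro U hU haU
        obtain ⟨bot, hbot⟩ := hglb univ (f.nonempty_of_mem univ_mem)
        obtain ⟨d, hdD, hdsub⟩ := hU.2 D ⟨hne, hdir⟩ bot
          (fun z hz => hU.1 hz.1 haU)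
        obtain ⟨A, hAf, hgA⟩ := hdD
        refine mem_of_superset hAf fun w hw => hdsub ⟨hgA.1 hw, hbot.1 (Set.mem_univ w)⟩
      · intro x hxa
        rw [Ultrafilter.mem_coe, Ultrafilter.compl_mem_iff_notMem]
        intro hIci
        exact hxa (hlub.1 ⟨Ici x, hIci, isGLB_Ici⟩)
    · constructor
      intro x
      have hx : ({x} : Set L) = Ici x ∩ Iic x := by
        rw [Set.Ici_inter_Iic, Set.Icc_self]
      rw [hx]
      apply IsClosed.inter
      · rw [← isOpen_compl_iff]
        exact isOpen_strongLawson_compl_Ici x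
      · rw [← isOpen_compl_iff]
        exact isOpen_strongLawson_of_sso (isOpen_generateFrom_of_mem (sso_compl_Iic x))

end Proofs
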